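/- (Bernstein's theorem) If a univariate real polynomial f satisfies f(x) > 0 for all x ∈ [-1,1], then there exist a natural number d and nonnegative reals c_{i,j} (for i + j = d) such that f(x) = Σ_{i+j=d} c_{i,j} (1+x)^i (1-x)^j. -/

import Mathlib

open Polynomial Finset

-- L1: partition of unity / basis identity for X^m
lemma bern_pow_eq (d m : ℕ) (hm : m ≤ d) :
    (X : ℝ[X])^m = ∑ i ∈ range (d+1),
      C (if m ≤ i then ((d-m).choose (i-m) : ℝ) else 0) * X^i * (1-X)^(d-i) := by
  have hsplit : d + 1 = m + (d - m + 1) := by omega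
  rw [hsplit, Finset.sum_range_add]
  have h1 : ∀ i ∈ range m,
      C (if m ≤ i then ((d-m).choose (i-m) : ℝ) else 0) * X^i * (1-X)^(d-i) = 0 := by
    intro i hi
    rw [mem_range] at hi
    rw [if_neg (by omega)]
    simp
  rw [Finset.sum_congr rfl h1, Finset.sum_const_zero, zero_add]
  have h2 : ∀ j ∈ range (d - m + 1),
      C (if m ≤ m + j then ((d-m).choose (m + j - m) : ℝ) else 0) * X^(m+j) * (1-X)^(d-(m+j))
      = X^m * (X^j * (1-X)^(d-m-j) * ((d-m).choose j : ℝ[X])) := by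
    intro j hj
    rw [mem_range] at hj
    rw [if_pos (by omega)]
    have : m + j - m = j := by omega
    rw [this]
    have : d - (m + j) = d - m - j := by omega
    rw [this, pow_add, map_natCast C]
    ring
  rw [Finset.sum_congr rfl h2, ← Finset.mul_sum, ← add_pow]
  norm_num

-- L2: any polynomial in the Bernstein-type basis
lemma bern_repr (g : ℝ[X]) (d : ℕ) (hd : g.natDegree ≤ d) :
    g = ∑ i ∈ range (d+1),
      C (∑ m ∈ range (g.natDegree + 1),
        g.coeff m * (if m ≤ i then ((d-m).choose (i-m) : ℝ) else 0)) * X^i * (1-X)^(d-i) := by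
  conv_lhs => rw [g.as_sum_range' (g.natDegree + 1) (Nat.lt_succ_self _)]
  have : ∀ m ∈ range (g.natDegree + 1),
      (monomial m) (g.coeff m) = ∑ i ∈ range (d+1),
        C (g.coeff m * (if m ≤ i then ((d-m).choose (i-m) : ℝ) else 0)) * X^i * (1-X)^(d-i) := by
    intro m hm
    rw [mem_range] at hm
    rw [← C_mul_X_pow_eq_monomial, bern_pow_eq d m (by omega), Finset.mul_sum]
    refine Finset.sum_congr rfl fun i hi => ?_
    rw [map_mul]
    ring
  rw [Finset.sum_congr rfl this, Finset.sum_comm]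
  refine Finset.sum_congr rfl fun i hi => ?_
  rw [← Finset.sum_mul, ← Finset.sum_mul, ← map_sum]

-- L3: the weight in terms of descending factorials
lemma bern_w_eq (d m i : ℕ) (hm : m ≤ d) (hi : i ≤ d) :
    (if m ≤ i then ((d-m).choose (i-m) : ℝ) else 0)
      = (d.choose i : ℝ) * ((i.descFactorial m : ℝ) / (d.descFactorial m : ℝ)) := by
  have hdpos : 0 < (d.descFactorial m : ℝ) := by
    have : d.descFactorial m ≠ 0 := fun h => by
      rw [Nat.descFactorial_eq_zero_iff_lt] at h; omega
    exact_mod_cast Nat.pos_of_ne_zero this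
  by_cases h : m ≤ i
  · rw [if_pos h]
    have key : (d-m).choose (i-m) * d.descFactorial m = d.choose i * i.descFactorial m := by
      rw [Nat.descFactorial_eq_factorial_mul_choose, Nat.descFactorial_eq_factorial_mul_choose]
      have := Nat.choose_mul (n := d) h
      calc (d-m).choose (i-m) * (m.factorial * d.choose m)
          = m.factorial * (d.choose m * (d-m).choose (i-m)) := by ring
        _ = m.factorial * (d.choose i * i.choose m) := by rw [← this]
        _ = d.choose i * (m.factorial * i.choose m) := by ring
    field_simp
    exact_mod_cast key
  · rw [if_neg h]
    rw [Nat.descFactorial_eq_zero_iff_lt.mpr (by omega)]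
    simp

-- L4: product difference bound
lemma prod_sub_prod_le (s : Finset ℕ) (p q : ℕ → ℝ)
    (h0 : ∀ k ∈ s, 0 ≤ p k) (h1 : ∀ k ∈ s, p k ≤ q k) (h2 : ∀ k ∈ s, q k ≤ 1) :
    ∏ k ∈ s, q k - ∏ k ∈ s, p k ≤ ∑ k ∈ s, (q k - p k) := by
  induction s using Finset.induction with
  | empty => simp
  | @insert a s ha ih =>
    rw [Finset.prod_insert ha, Finset.prod_insert ha, Finset.sum_insert ha]
    have hp0 : 0 ≤ ∏ k ∈ s, p k := Finset.prod_nonneg (fun k hk => h0 k (mem_insert_of_mem hk))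
    have hq1 : ∏ k ∈ s, q k ≤ 1 := Finset.prod_le_one
      (fun k hk => le_trans (h0 k (mem_insert_of_mem hk)) (h1 k (mem_insert_of_mem hk)))
      (fun k hk => h2 k (mem_insert_of_mem hk))
    have hpq : ∏ k ∈ s, p k ≤ ∏ k ∈ s, q k := Finset.prod_le_prod
      (fun k hk => h0 k (mem_insert_of_mem hk)) (fun k hk => h1 k (mem_insert_of_mem hk))
    have ih' := ih (fun k hk => h0 k (mem_insert_of_mem hk))
      (fun k hk => h1 k (mem_insert_of_mem hk)) (fun k hk => h2 k (mem_insert_of_mem hk))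
    have ha0 : 0 ≤ p a := h0 a (mem_insert_self a s)
    have ha1 : p a ≤ q a := h1 a (mem_insert_self a s)
    have ha2 : q a ≤ 1 := h2 a (mem_insert_self a s)
    nlinarith

lemma bern_ratio_bound (n d m i : ℕ) (hm : m ≤ n) (hd : 2*n < d) (hi : i ≤ d) :
    |(i.descFactorial m : ℝ) / (d.descFactorial m : ℝ) - ((i:ℝ)/d)^m| ≤ 2*n^2/d := by
  have hd0 : (0:ℝ) < d := by
    have : 0 < d := by omega
    exact_mod_cast this
  have hq0 : (0:ℝ) ≤ (i:ℝ)/d := by positivity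
  have hq1 : (i:ℝ)/d ≤ 1 := by
    rw [div_le_one hd0]; exact_mod_cast hi
  rcases Nat.eq_zero_or_pos m with hm0 | hm1
  · subst hm0
    simp only [Nat.descFactorial_zero, pow_zero, Nat.cast_one, div_self (ne_of_gt hd0)]
    simp
    positivity
  have hn1 : 1 ≤ n := le_trans hm1 hm
  have hnd : (2*n^2 : ℝ)/d = 2*(n:ℝ)^2/d := by norm_num
  by_cases hmi : m ≤ i
  · -- main case: express as product
    have hcasti : (i.descFactorial m : ℝ) = ∏ k ∈ range m, ((i:ℝ) - k) := by
      rw [Nat.descFactorial_eq_prod_range, Nat.cast_prod]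
      refine Finset.prod_congr rfl fun k hk => ?_
      rw [mem_range] at hk
      have : k ≤ i := by omega
      exact Nat.cast_sub this
    have hcastd : (d.descFactorial m : ℝ) = ∏ k ∈ range m, ((d:ℝ) - k) := by
      rw [Nat.descFactorial_eq_prod_range, Nat.cast_prod]
      refine Finset.prod_congr rfl fun k hk => ?_
      rw [mem_range] at hk
      have : k ≤ d := by omega
      exact Nat.cast_sub this
    have hdk : ∀ k ∈ range m, (0:ℝ) < (d:ℝ) - k := by
      intro k hk; rw [mem_range] at hk
      have : k < d := by omega
      have : (k:ℝ) < d := by exact_mod_cast this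
      linarith
    have hratio : (i.descFactorial m : ℝ) / (d.descFactorial m : ℝ)
        = ∏ k ∈ range m, (((i:ℝ) - k) / ((d:ℝ) - k)) := by
      rw [hcasti, hcastd, ← Finset.prod_div_distrib]
    set p : ℕ → ℝ := fun k => ((i:ℝ) - k) / ((d:ℝ) - k) with hp
    have h0 : ∀ k ∈ range m, 0 ≤ p k := by
      intro k hk
      have hik : (k:ℝ) ≤ i := by
        rw [mem_range] at hk; exact_mod_cast le_trans (le_of_lt hk) hmi
      exact div_nonneg (by linarith) (le_of_lt (hdk k hk))
    have h1 : ∀ k ∈ range m, p k ≤ (i:ℝ)/d := by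
      intro k hk
      rw [div_le_div_iff₀ (hdk k hk) hd0]
      have hk' : (0:ℝ) ≤ k := Nat.cast_nonneg k
      have : (i:ℝ) ≤ d := by exact_mod_cast hi
      nlinarith
    have h2 : ∀ k ∈ range m, (i:ℝ)/d ≤ 1 := fun k _ => hq1
    have hdiff : ∀ k ∈ range m, (i:ℝ)/d - p k ≤ 2*(n:ℝ)/d := by
      intro k hk
      rw [mem_range] at hk
      have hkn : (k:ℝ) ≤ (n:ℝ) - 1 := by
        have : k + 1 ≤ n := by omega
        have : (k:ℝ) + 1 ≤ n := by exact_mod_cast this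
        linarith
      have hdn : 2*(n:ℝ) < d := by exact_mod_cast hd
      have hdk' : (0:ℝ) < (d:ℝ) - k := hdk k (mem_range.mpr hk)
      have hi' : (0:ℝ) ≤ i := Nat.cast_nonneg i
      have hi'' : (i:ℝ) ≤ d := by exact_mod_cast hi
      have hk0 : (0:ℝ) ≤ k := Nat.cast_nonneg k
      have hn0 : (1:ℝ) ≤ n := by exact_mod_cast hn1
      have hn0' : (0:ℝ) < n := by linarith
      have key : (k:ℝ)*((d:ℝ)-(i:ℝ)) ≤ 2*(n:ℝ)*((d:ℝ)-k) := by
        nlinarith [mul_le_mul_of_nonneg_right hkn hd0.le,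
          mul_lt_mul_of_pos_left hdn hn0', mul_nonneg hk0 (sub_nonneg.mpr hi'')]
      rw [div_sub_div _ _ (ne_of_gt hd0) (ne_of_gt hdk'), div_le_div_iff₀ (by positivity) hd0]
      nlinarith [mul_le_mul_of_nonneg_left key hd0.le]
    have hprodle : ∏ k ∈ range m, p k ≤ ((i:ℝ)/d)^m := by
      calc ∏ k ∈ range m, p k ≤ ∏ k ∈ range m, (i:ℝ)/d := Finset.prod_le_prod h0 h1
        _ = ((i:ℝ)/d)^m := by rw [Finset.prod_const, card_range]
    have hsum : ∑ k ∈ range m, ((i:ℝ)/d - p k) ≤ 2*(n:ℝ)^2/d := by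
      calc ∑ k ∈ range m, ((i:ℝ)/d - p k) ≤ ∑ k ∈ range m, 2*(n:ℝ)/d :=
            Finset.sum_le_sum hdiff
        _ = m * (2*(n:ℝ)/d) := by rw [Finset.sum_const, card_range]; ring
        _ ≤ n * (2*(n:ℝ)/d) := by
            have : (m:ℝ) ≤ n := by exact_mod_cast hm
            have h2nd : (0:ℝ) ≤ 2*(n:ℝ)/d := by positivity
            nlinarith
        _ = 2*(n:ℝ)^2/d := by ring
    have hkey := prod_sub_prod_le (range m) p (fun _ => (i:ℝ)/d) h0 h1 h2
    rw [Finset.prod_const, card_range] at hkey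
    rw [hratio, abs_sub_comm, abs_of_nonneg (by linarith), hnd]
    linarith
  · -- i < m : descFactorial is 0
    rw [Nat.descFactorial_eq_zero_iff_lt.mpr (by omega), Nat.cast_zero, zero_div,
      zero_sub, abs_neg, abs_of_nonneg (by positivity), hnd]
    have h1 : ((i:ℝ)/d)^m ≤ ((i:ℝ)/d)^1 := pow_le_pow_of_le_one hq0 hq1 hm1
    rw [pow_one] at h1
    have h2 : (i:ℝ)/d ≤ 2*(n:ℝ)^2/d := by
      have hin : (i:ℝ) ≤ 2*(n:ℝ)^2 := by
        have h3 : i ≤ n := by omega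
        have h3' : (i:ℝ) ≤ n := by exact_mod_cast h3
        have h4 : (1:ℝ) ≤ n := by exact_mod_cast hn1
        nlinarith
      gcongr
    linarith

theorem bernstein01 (g : ℝ[X]) (hg : ∀ y ∈ Set.Icc (0:ℝ) 1, 0 < g.eval y) :
    ∃ (d : ℕ) (a : ℕ → ℝ), (∀ i, 0 ≤ a i) ∧
      g = ∑ i ∈ range (d+1), C (a i) * X^i * (1-X)^(d-i) := by
  set n := g.natDegree with hn
  set L : ℝ := ∑ m ∈ range (n+1), |g.coeff m| with hL
  have hL0 : 0 ≤ L := Finset.sum_nonneg fun m _ => abs_nonneg _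
  -- minimum of g on [0,1]
  obtain ⟨x₀, hx₀, hmin⟩ := isCompact_Icc.exists_isMinOn (Set.nonempty_Icc.mpr zero_le_one)
    (g.continuous_aeval.continuousOn (s := Set.Icc (0:ℝ) 1))
  set μ : ℝ := g.eval x₀ with hμ
  have hμ0 : 0 < μ := hg x₀ hx₀
  have hμle : ∀ y ∈ Set.Icc (0:ℝ) 1, μ ≤ g.eval y := fun y hy => hmin hy
  -- choose degree
  set d : ℕ := 2*n + 1 + ⌈(2*L*(n:ℝ)^2)/μ⌉₊ with hd
  have hdn : 2*n < d := by omega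
  have hd0 : (0:ℝ) < d := by
    have : 0 < d := by omega
    exact_mod_cast this
  have hderr : L * (2*(n:ℝ)^2/d) ≤ μ := by
    have h1 : (2*L*(n:ℝ)^2)/μ ≤ ⌈(2*L*(n:ℝ)^2)/μ⌉₊ := Nat.le_ceil _
    have h2 : (⌈(2*L*(n:ℝ)^2)/μ⌉₊ : ℝ) ≤ d := by
      have : (⌈(2*L*(n:ℝ)^2)/μ⌉₊ : ℕ) ≤ d := by omega
      exact_mod_cast this
    have h3 : (2*L*(n:ℝ)^2)/μ ≤ d := le_trans h1 h2
    rw [div_le_iff₀ hμ0] at h3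
    rw [mul_div_assoc']
    rw [div_le_iff₀ hd0]
    nlinarith
  -- the coefficients
  set a : ℕ → ℝ := fun i => ∑ m ∈ range (n+1),
      g.coeff m * (if m ≤ i then ((d-m).choose (i-m) : ℝ) else 0) with ha
  refine ⟨d, a, ?_, bern_repr g d (by omega)⟩
  intro i
  by_cases hi : i ≤ d
  · -- main case
    have hrw : a i = (d.choose i : ℝ) * ∑ m ∈ range (n+1),
        g.coeff m * ((i.descFactorial m : ℝ) / (d.descFactorial m : ℝ)) := by
      rw [ha, Finset.mul_sum]
      refine Finset.sum_congr rfl fun m hm => ?_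
      rw [mem_range] at hm
      rw [bern_w_eq d m i (by omega) hi]
      ring
    rw [hrw]
    have hq : (i:ℝ)/d ∈ Set.Icc (0:ℝ) 1 := by
      constructor
      · positivity
      · rw [div_le_one hd0]; exact_mod_cast hi
    have heval : g.eval ((i:ℝ)/d) = ∑ m ∈ range (n+1), g.coeff m * ((i:ℝ)/d)^m := by
      rw [eval_eq_sum_range' (Nat.lt_succ_self n)]
    have herr : |∑ m ∈ range (n+1), g.coeff m *
        ((i.descFactorial m : ℝ) / (d.descFactorial m : ℝ) - ((i:ℝ)/d)^m)| ≤ L * (2*(n:ℝ)^2/d) := by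
      calc |∑ m ∈ range (n+1), g.coeff m *
            ((i.descFactorial m : ℝ) / (d.descFactorial m : ℝ) - ((i:ℝ)/d)^m)|
          ≤ ∑ m ∈ range (n+1), |g.coeff m *
            ((i.descFactorial m : ℝ) / (d.descFactorial m : ℝ) - ((i:ℝ)/d)^m)| :=
            Finset.abs_sum_le_sum_abs _ _
        _ ≤ ∑ m ∈ range (n+1), |g.coeff m| * (2*(n:ℝ)^2/d) := by
            refine Finset.sum_le_sum fun m hm => ?_
            rw [mem_range] at hm
            rw [abs_mul]
            refine mul_le_mul_of_nonneg_left ?_ (abs_nonneg _)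
            have := bern_ratio_bound n d m i (by omega) hdn hi
            calc |(i.descFactorial m : ℝ) / (d.descFactorial m : ℝ) - ((i:ℝ)/d)^m|
                ≤ 2*(n:ℕ)^2/(d:ℝ) := this
              _ = 2*(n:ℝ)^2/d := by push_cast; ring
        _ = L * (2*(n:ℝ)^2/d) := by rw [← Finset.sum_mul]
    have hsplit : ∑ m ∈ range (n+1),
        g.coeff m * ((i.descFactorial m : ℝ) / (d.descFactorial m : ℝ))
        = g.eval ((i:ℝ)/d) + ∑ m ∈ range (n+1), g.coeff m *
          ((i.descFactorial m : ℝ) / (d.descFactorial m : ℝ) - ((i:ℝ)/d)^m) := by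
      rw [heval, ← Finset.sum_add_distrib]
      refine Finset.sum_congr rfl fun m hm => ?_
      ring
    have hge : 0 ≤ ∑ m ∈ range (n+1),
        g.coeff m * ((i.descFactorial m : ℝ) / (d.descFactorial m : ℝ)) := by
      rw [hsplit]
      have h1 := hμle _ hq
      have h2 := neg_abs_le (∑ m ∈ range (n+1), g.coeff m *
        ((i.descFactorial m : ℝ) / (d.descFactorial m : ℝ) - ((i:ℝ)/d)^m))
      linarith
    exact mul_nonneg (Nat.cast_nonneg _) hge
  · -- i > d : all weights vanish
    rw [ha]
    refine le_of_eq (Finset.sum_eq_zero fun m hm => ?_).symm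
    rw [mem_range] at hm
    by_cases hmi : m ≤ i
    · rw [if_pos hmi, Nat.choose_eq_zero_of_lt (by omega), Nat.cast_zero, mul_zero]
    · rw [if_neg hmi, mul_zero]

theorem bernstein_theorem (f : Polynomial ℝ)
    (hf : ∀ x ∈ Set.Icc (-1 : ℝ) 1, 0 < f.eval x) :
    ∃ (d : ℕ) (c : ℕ → ℝ), (∀ i, 0 ≤ c i) ∧
      f = ∑ i ∈ Finset.range (d + 1),
        C (c i) * (1 + X)^i * (1 - X)^(d - i) := by
  set g : ℝ[X] := f.comp (C 2 * X - 1) with hg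
  have hgpos : ∀ y ∈ Set.Icc (0:ℝ) 1, 0 < g.eval y := by
    intro y hy
    rw [hg, eval_comp]
    apply hf
    simp only [eval_sub, eval_mul, eval_C, eval_X, eval_one]
    constructor <;> [linarith [hy.1]; linarith [hy.2]]
  obtain ⟨d, a, ha0, hrepr⟩ := bernstein01 g hgpos
  refine ⟨d, fun i => a i * (2⁻¹:ℝ)^d, fun i => mul_nonneg (ha0 i) (by positivity), ?_⟩
  set h : ℝ[X] := C (2⁻¹:ℝ) * (X + 1) with hh
  have hcomp : (C (2:ℝ) * X - 1).comp h = X := by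
    rw [hh]
    simp only [sub_comp, mul_comp, C_comp, X_comp, one_comp]
    rw [← mul_assoc, ← C_mul]
    norm_num
  have hf_eq : f = g.comp h := by
    rw [hg, comp_assoc, hcomp, comp_X]
  rw [hf_eq, hrepr, Polynomial.sum_comp]
  refine Finset.sum_congr rfl fun i hi => ?_
  rw [mem_range] at hi
  rw [mul_comp, mul_comp, C_comp, pow_comp, pow_comp, X_comp, sub_comp, one_comp]
  have hhalf : (C (2⁻¹:ℝ)) + C 2⁻¹ = 1 := by rw [← C_add]; norm_num
  have h1h : (1:ℝ[X]) - h = C (2⁻¹:ℝ) * (1 - X) := by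
    rw [hh]
    linear_combination (-1 : ℝ[X]) * hhalf
  rw [X_comp, h1h, hh, mul_pow, mul_pow, ← C_pow, ← C_pow]
  rw [show C (a i) * (C ((2⁻¹:ℝ) ^ i) * (X + 1) ^ i) * (C ((2⁻¹:ℝ) ^ (d - i)) * (1 - X) ^ (d - i))
      = (C (a i) * C ((2⁻¹:ℝ)^i) * C ((2⁻¹:ℝ)^(d-i))) * (X+1)^i * (1-X)^(d-i) by ring,
    ← C_mul, ← C_mul]
  have hpow : a i * (2⁻¹:ℝ)^i * (2⁻¹:ℝ)^(d-i) = a i * (2⁻¹:ℝ)^d := by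
    rw [mul_assoc, ← pow_add]
    congr 2
    omega
  rw [hpow, show (X + 1 : ℝ[X]) = 1 + X by ring]
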